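/- Let n ≥ 1. For every θ₀ > 0 there exists θ ∈ (0,1), depending only on n and θ₀, such that for every r > 0: |C_{θ r^{−1/n}}((0,0)) \ E(r)| ≤ (θ₀/4) · |C_{θ r^{−1/n}}|, where C_ρ((0,0)) = B_ρ(0) × (−ρ², 0). -/

import Mathlib

open MeasureTheory Real Set Metric Filter

noncomputable section

/-- The space ℝ^n × ℝ (spatial × time). -/
abbrev Spc (n : ℕ) := EuclideanSpace ℝ (Fin n) × ℝ

/-- Parabolic cylinder C_r(Y) = B_r(y) × (s - r², s). -/
def pCyl (n : ℕ) (Y : Spc n) (r : ℝ) : Set (Spc n) :=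
  (Metric.ball Y.1 r) ×ˢ (Set.Ioo (Y.2 - r ^ 2) Y.2)

/-- |C_r|: the measure of a parabolic cylinder of radius r. -/
def cylVol (n : ℕ) (r : ℝ) : ENNReal :=
  volume (pCyl n ((0 : EuclideanSpace ℝ (Fin n)), (0 : ℝ)) r)

/-- The parabolic boundary of an open set Q. -/
def pBoundary (n : ℕ) (Q : Set (Spc n)) : Set (Spc n) :=
  {X | X ∈ frontier Q ∧ ∃ δ > (0 : ℝ), ∃ γ : ℝ → EuclideanSpace ℝ (Fin n),
    ContinuousOn γ (Set.Ico X.2 (X.2 + δ)) ∧ γ X.2 = X.1 ∧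
    ∀ t ∈ Set.Ioo X.2 (X.2 + δ), (γ t, t) ∈ Q}

/-- Condition (A): exterior measure condition. -/
def condA (n : ℕ) (Q : Set (Spc n)) (θ₀ : ℝ) : Prop :=
  ∀ X ∈ pBoundary n Q, ∀ r > (0 : ℝ),
    ENNReal.ofReal θ₀ * cylVol n r < volume (pCyl n X r \ Q)

/-- Parabolic distance. -/
def pDist (n : ℕ) (X Y : Spc n) : ℝ := max ‖X.1 - Y.1‖ (Real.sqrt |X.2 - Y.2|)

/-- The fundamental solution of the heat equation. -/
def heatF (n : ℕ) (x : EuclideanSpace ℝ (Fin n)) (t : ℝ) : ℝ :=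
  if 0 < t then (4 * π * t) ^ (-(n : ℝ) / 2) * Real.exp (-‖x‖ ^ 2 / (4 * t)) else 0

/-- Heat ball E(X, r). -/
def heatBall (n : ℕ) (X : Spc n) (r : ℝ) : Set (Spc n) :=
  {Y | r ≤ heatF n (X.1 - Y.1) (X.2 - Y.2)}

/-- Thermal capacity of a set. -/
def thermalCap (n : ℕ) (K : Set (Spc n)) : ENNReal :=
  sSup {m : ENNReal | ∃ μ : Measure (Spc n), IsFiniteMeasure μ ∧ μ Kᶜ = 0 ∧
    (∀ X : Spc n, ∫⁻ Y, ENNReal.ofReal (heatF n (X.1 - Y.1) (X.2 - Y.2)) ∂μ ≤ 1) ∧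
    m = μ Set.univ}

/-- Heat shell {Y : a ≤ F(Y₀ - Y) ≤ b}. -/
def heatShell (n : ℕ) (Y₀ : Spc n) (a b : ℝ) : Set (Spc n) :=
  {Y | a ≤ heatF n (Y₀.1 - Y.1) (Y₀.2 - Y.2) ∧ heatF n (Y₀.1 - Y.1) (Y₀.2 - Y.2) ≤ b}

/-! ### Auxiliary lemmas -/

lemma heatF_meas' (n : ℕ) : Measurable (fun Y : Spc n => heatF n (0 - Y.1) (0 - Y.2)) := by
  unfold heatF
  apply Measurable.ite
  · exact measurableSet_lt measurable_const (measurable_const.sub measurable_snd)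
  · measurability
  · measurability

lemma heatF_pos' (n : ℕ) {x : EuclideanSpace ℝ (Fin n)} {t : ℝ} (ht : 0 < t) :
    0 < heatF n x t := by
  rw [heatF, if_pos ht]
  have h4 : 0 < 4 * π * t := by positivity
  positivity

lemma heatF_scale' (n : ℕ) {ρ : ℝ} (hρ : 0 < ρ) (x : EuclideanSpace ℝ (Fin n)) (t : ℝ) :
    heatF n (ρ • x) (ρ ^ 2 * t) = (ρ ^ n)⁻¹ * heatF n x t := by
  unfold heatF
  by_cases ht : 0 < t
  · rw [if_pos (by positivity), if_pos ht]
    have h1 : 4 * π * (ρ ^ 2 * t) = ρ ^ 2 * (4 * π * t) := by ring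
    have hρ2 : (0:ℝ) ≤ ρ ^ 2 := sq_nonneg ρ
    have h2 : (ρ ^ 2 * (4 * π * t)) ^ (-(n : ℝ) / 2)
        = (ρ ^ 2) ^ (-(n : ℝ) / 2) * (4 * π * t) ^ (-(n : ℝ) / 2) :=
      Real.mul_rpow hρ2 (by positivity)
    have h3 : (ρ ^ 2 : ℝ) ^ (-(n : ℝ) / 2) = (ρ ^ n)⁻¹ := by
      rw [← Real.rpow_natCast ρ 2, ← Real.rpow_mul hρ.le,
        show ((2:ℕ):ℝ) * (-(n:ℝ)/2) = -(n:ℝ) by push_cast; ring, Real.rpow_neg hρ.le,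
        Real.rpow_natCast]
    have h4 : ‖ρ • x‖ ^ 2 = ρ ^ 2 * ‖x‖ ^ 2 := by
      rw [norm_smul, Real.norm_eq_abs, mul_pow, sq_abs]
    have h5 : -‖ρ • x‖ ^ 2 / (4 * (ρ ^ 2 * t)) = -‖x‖ ^ 2 / (4 * t) := by
      rw [h4]
      have : ρ ^ 2 ≠ 0 := by positivity
      field_simp
    rw [h1, h2, h3, h5]
    ring
  · rw [if_neg ht, if_neg, mul_zero]
    intro h
    exact ht (by nlinarith [sq_nonneg ρ])

lemma vol_image_scale' (n : ℕ) {ρ : ℝ} (hρ : 0 < ρ) (S : Set (Spc n)) (hS : MeasurableSet S) :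
    volume ((fun p : Spc n => (ρ • p.1, ρ ^ 2 * p.2)) '' S)
      = ENNReal.ofReal (ρ ^ (n + 2)) * volume S := by
  set f : EuclideanSpace ℝ (Fin n) → EuclideanSpace ℝ (Fin n) := fun x => ρ⁻¹ • x with hf
  set g : ℝ → ℝ := fun t => (ρ ^ 2)⁻¹ * t with hg
  have hρ0 : ρ ≠ 0 := hρ.ne'
  have hρ20 : (ρ:ℝ) ^ 2 ≠ 0 := by positivity
  have himg : (fun p : Spc n => (ρ • p.1, ρ ^ 2 * p.2)) '' S = Prod.map f g ⁻¹' S := by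
    rw [Set.image_eq_preimage_of_inverse (g := Prod.map f g)]
    · intro p
      simp [f, g, Prod.map, smul_smul, inv_mul_cancel₀ hρ0, inv_mul_cancel_left₀ hρ20]
    · intro p
      simp [f, g, Prod.map, smul_smul, mul_inv_cancel₀ hρ0, mul_inv_cancel_left₀ hρ20]
  have hfm : Measurable f := (continuous_const_smul (ρ⁻¹ : ℝ)).measurable
  have hgm : Measurable g := measurable_const_mul _
  have hmap : Measurable (Prod.map f g) := hfm.prodMap hgm
  rw [himg, ← Measure.map_apply hmap hS, Measure.volume_eq_prod,
    ← Measure.map_prod_map _ _ hfm hgm]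
  have h1 : Measure.map f (volume : Measure (EuclideanSpace ℝ (Fin n)))
      = ENNReal.ofReal (ρ ^ n) • volume := by
    rw [hf]
    rw [Measure.map_addHaar_smul _ (inv_ne_zero hρ0)]
    congr 1
    rw [finrank_euclideanSpace_fin]
    rw [abs_of_pos (by positivity), inv_pow, inv_inv]
  have h2 : Measure.map g (volume : Measure ℝ)
      = ENNReal.ofReal (ρ ^ 2) • volume := by
    rw [hg]
    rw [Real.map_volume_mul_left (inv_ne_zero hρ20), inv_inv, abs_of_pos (by positivity)]
  rw [h1, h2]
  rw [Measure.prod_apply hS]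
  simp only [Measure.smul_apply, smul_eq_mul]
  rw [lintegral_smul_measure]
  rw [lintegral_const_mul' _ _ (by exact ENNReal.ofReal_ne_top)]
  rw [← Measure.prod_apply hS, ← Measure.volume_eq_prod, smul_eq_mul, ← mul_assoc,
    ← ENNReal.ofReal_mul (by positivity)]
  congr 2
  ring

lemma image_scale_mem' (n : ℕ) {ρ : ℝ} (hρ : 0 < ρ) (S : Set (Spc n)) :
    (fun p : Spc n => (ρ • p.1, ρ ^ 2 * p.2)) '' S
      = {p : Spc n | (ρ⁻¹ • p.1, (ρ ^ 2)⁻¹ * p.2) ∈ S} := by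
  have hρ0 : ρ ≠ 0 := hρ.ne'
  have hρ20 : (ρ:ℝ) ^ 2 ≠ 0 := by positivity
  rw [Set.image_eq_preimage_of_inverse
      (g := fun p : Spc n => (ρ⁻¹ • p.1, (ρ ^ 2)⁻¹ * p.2))]
  · rfl
  · intro p
    simp [smul_smul, inv_mul_cancel₀ hρ0, inv_mul_cancel_left₀ hρ20]
  · intro p
    simp [smul_smul, mul_inv_cancel₀ hρ0, mul_inv_cancel_left₀ hρ20]

lemma image_pCyl' (n : ℕ) {ρ : ℝ} (hρ : 0 < ρ) :
    (fun p : Spc n => (ρ • p.1, ρ ^ 2 * p.2)) ''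
        pCyl n ((0 : EuclideanSpace ℝ (Fin n)), (0 : ℝ)) 1
      = pCyl n ((0 : EuclideanSpace ℝ (Fin n)), (0 : ℝ)) ρ := by
  rw [image_scale_mem' n hρ]
  ext p
  have hρ2 : (0:ℝ) < ρ ^ 2 := by positivity
  simp only [pCyl, Set.mem_setOf_eq, Set.mem_prod, mem_ball_zero_iff, Set.mem_Ioo,
    norm_smul, Real.norm_eq_abs, abs_of_pos (inv_pos.2 hρ)]
  rw [inv_mul_lt_iff₀ hρ, mul_one, inv_mul_lt_iff₀ hρ2, mul_zero,
    lt_inv_mul_iff₀ hρ2]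
  constructor
  · rintro ⟨h1, h2, h3⟩
    exact ⟨h1, by nlinarith, h3⟩
  · rintro ⟨h1, h2, h3⟩
    exact ⟨h1, by nlinarith, h3⟩

lemma image_heatBall' (n : ℕ) {ρ : ℝ} (hρ : 0 < ρ) (a : ℝ) :
    (fun p : Spc n => (ρ • p.1, ρ ^ 2 * p.2)) ''
        heatBall n ((0 : EuclideanSpace ℝ (Fin n)), (0 : ℝ)) a
      = heatBall n ((0 : EuclideanSpace ℝ (Fin n)), (0 : ℝ)) ((ρ ^ n)⁻¹ * a) := by
  have hρ0 : ρ ≠ 0 := hρ.ne'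
  have hρn : (0:ℝ) < ρ ^ n := by positivity
  rw [image_scale_mem' n hρ]
  ext p
  simp only [heatBall, Set.mem_setOf_eq]
  have key : heatF n ((0:EuclideanSpace ℝ (Fin n)) - ρ⁻¹ • p.1) (0 - (ρ ^ 2)⁻¹ * p.2)
      = ((ρ⁻¹) ^ n)⁻¹ * heatF n (0 - p.1) (0 - p.2) := by
    have h1 : (0:EuclideanSpace ℝ (Fin n)) - ρ⁻¹ • p.1 = ρ⁻¹ • ((0:EuclideanSpace ℝ (Fin n)) - p.1) := by
      rw [smul_sub, smul_zero]
    have h2 : 0 - (ρ ^ 2)⁻¹ * p.2 = (ρ⁻¹) ^ 2 * (0 - p.2) := by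
      rw [inv_pow]; ring
    rw [h1, h2, heatF_scale' n (inv_pos.2 hρ)]
  rw [key]
  rw [inv_pow, inv_inv]
  constructor
  · intro h
    calc (ρ ^ n)⁻¹ * a ≤ (ρ ^ n)⁻¹ * (ρ ^ n * heatF n (0 - p.1) (0 - p.2)) := by
          exact mul_le_mul_of_nonneg_left h (by positivity)
      _ = heatF n (0 - p.1) (0 - p.2) := by field_simp
  · intro h
    calc a = ρ ^ n * ((ρ ^ n)⁻¹ * a) := by field_simp
      _ ≤ ρ ^ n * heatF n (0 - p.1) (0 - p.2) := mul_le_mul_of_nonneg_left h (by positivity)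

lemma injective_scale' (n : ℕ) {ρ : ℝ} (hρ : 0 < ρ) :
    Function.Injective (fun p : Spc n => (ρ • p.1, ρ ^ 2 * p.2)) := by
  intro p q h
  simp only [Prod.mk.injEq] at h
  have h1 : p.1 = q.1 := smul_right_injective _ hρ.ne' h.1
  have h2 : p.2 = q.2 := by
    have := h.2
    have hρ2 : (ρ:ℝ) ^ 2 ≠ 0 := by positivity
    field_simp at this
    exact this
  exact Prod.ext h1 h2

lemma measurableSet_pCyl' (n : ℕ) (Y : Spc n) (r : ℝ) : MeasurableSet (pCyl n Y r) :=
  measurableSet_ball.prod measurableSet_Ioo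

lemma measurableSet_heatBall' (n : ℕ) (a : ℝ) :
    MeasurableSet (heatBall n ((0 : EuclideanSpace ℝ (Fin n)), (0 : ℝ)) a) :=
  measurableSet_le measurable_const (heatF_meas' n)

lemma heatBall_mono' (n : ℕ) {a b : ℝ} (hab : a ≤ b) :
    heatBall n ((0 : EuclideanSpace ℝ (Fin n)), (0 : ℝ)) b
      ⊆ heatBall n ((0 : EuclideanSpace ℝ (Fin n)), (0 : ℝ)) a :=
  fun _ h => le_trans hab h

lemma cylVol_one_pos' (n : ℕ) : 0 < cylVol n 1 := by
  rw [cylVol, pCyl, Measure.volume_eq_prod, Measure.prod_prod]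
  apply ENNReal.mul_pos
  · exact (measure_ball_pos _ _ one_pos).ne'
  · simp [Real.volume_Ioo]


lemma cylVol_one_ne_top' (n : ℕ) : cylVol n 1 ≠ ⊤ := by
  rw [cylVol, pCyl, Measure.volume_eq_prod, Measure.prod_prod]
  exact ENNReal.mul_ne_top measure_ball_lt_top.ne (by simp [Real.volume_Ioo])

/-- small cylinders are almost contained in heat balls. -/
theorem cylinder_almost_in_heatBall (n : ℕ) (hn : 1 ≤ n) (θ₀ : ℝ) (hθ₀ : 0 < θ₀) :
    ∃ θ ∈ Set.Ioo (0 : ℝ) 1, ∀ r > (0 : ℝ),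
      volume (pCyl n ((0 : EuclideanSpace ℝ (Fin n)), (0 : ℝ)) (θ * r ^ (-1 / (n : ℝ))) \
          heatBall n ((0 : EuclideanSpace ℝ (Fin n)), (0 : ℝ)) r) ≤
        ENNReal.ofReal (θ₀ / 4) * cylVol n (θ * r ^ (-1 / (n : ℝ))) := by
  have hn0 : (n:ℝ) ≠ 0 := by positivity
  set O : Spc n := ((0 : EuclideanSpace ℝ (Fin n)), (0 : ℝ)) with hO
  set C₁ : Set (Spc n) := pCyl n O 1 with hC₁
  set A : ℕ → Set (Spc n) := fun k => C₁ \ heatBall n O (1 / (k + 1)) with hA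
  set ε : ENNReal := ENNReal.ofReal (θ₀ / 4) * cylVol n 1 with hε
  have hεpos : 0 < ε := by
    apply ENNReal.mul_pos
    · simp only [ne_eq, ENNReal.ofReal_eq_zero, not_le]; positivity
    · exact (cylVol_one_pos' n).ne'
  have hAmeas : ∀ k, MeasurableSet (A k) :=
    fun k => (measurableSet_pCyl' n O 1).diff (measurableSet_heatBall' n _)
  have hAanti : Antitone A := by
    intro k m hkm
    apply Set.diff_subset_diff_right
    apply heatBall_mono' n
    apply one_div_le_one_div_of_le (by positivity)
    have : (k:ℝ) ≤ m := Nat.cast_le.2 hkm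
    linarith
  have hAfin : volume (A 0) ≠ ⊤ := by
    refine ne_top_of_le_ne_top (cylVol_one_ne_top' n) (measure_mono ?_)
    exact Set.diff_subset
  have hInter : ⋂ k, A k = ∅ := by
    ext Y
    simp only [Set.mem_iInter, Set.mem_empty_iff_false, iff_false, not_forall]
    by_cases hY : Y ∈ C₁
    · have hY2 : 0 < O.2 - Y.2 := by
        have h := hY.2
        simp only [Set.mem_Ioo] at h
        have hO2 : O.2 = 0 := rfl
        rw [hO2]
        linarith [h.2]
      have hpos : 0 < heatF n (O.1 - Y.1) (O.2 - Y.2) := heatF_pos' n hY2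
      obtain ⟨k, hk⟩ := exists_nat_one_div_lt hpos
      exact ⟨k, fun hmem => hmem.2 hk.le⟩
    · exact ⟨0, fun hmem => hY hmem.1⟩
  have htend : Tendsto (fun k => volume (A k)) atTop (nhds 0) := by
    have := tendsto_measure_iInter_atTop (μ := volume)
      (fun k => (hAmeas k).nullMeasurableSet) hAanti ⟨0, hAfin⟩
    rw [hInter, measure_empty] at this
    exact this
  obtain ⟨k, hk⟩ := (htend.eventually_lt_const hεpos).exists
  set θ : ℝ := min (1/2) ((1 / (k + 1) : ℝ) ^ (1 / (n:ℝ))) with hθ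
  have hbase : (0:ℝ) < 1 / (k + 1) := by positivity
  have hθpos : 0 < θ := lt_min (by norm_num) (Real.rpow_pos_of_pos hbase _)
  have hθlt1 : θ < 1 := lt_of_le_of_lt (min_le_left _ _) (by norm_num)
  have hθn_le : θ ^ n ≤ 1 / (k + 1) := by
    calc θ ^ n ≤ ((1 / (k + 1) : ℝ) ^ (1 / (n:ℝ))) ^ n :=
          pow_le_pow_left₀ hθpos.le (min_le_right _ _) n
      _ = 1 / (k + 1) := by
          rw [← Real.rpow_natCast ((1 / (k + 1) : ℝ) ^ (1 / (n:ℝ))) n,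
            ← Real.rpow_mul hbase.le, one_div_mul_cancel hn0, Real.rpow_one]
  refine ⟨θ, ⟨hθpos, hθlt1⟩, fun r hr => ?_⟩
  set ρ : ℝ := θ * r ^ (-1 / (n:ℝ)) with hρdef
  have hρ : 0 < ρ := mul_pos hθpos (Real.rpow_pos_of_pos hr _)
  have hexp : (-1 / (n:ℝ)) * (n:ℕ) = -1 := by field_simp
  have hρn : ρ ^ n = θ ^ n * r⁻¹ := by
    rw [hρdef, mul_pow, ← Real.rpow_natCast (r ^ (-1 / (n:ℝ))) n,
      ← Real.rpow_mul hr.le, hexp, Real.rpow_neg_one]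
  have hkey : (ρ ^ n)⁻¹ * (θ ^ n) = r := by
    rw [hρn]
    have hθn0 : θ ^ n ≠ 0 := by positivity
    field_simp
  -- the set identity
  set T : Spc n → Spc n := fun p => (ρ • p.1, ρ ^ 2 * p.2) with hT
  have himgC : T '' pCyl n O 1 = pCyl n O ρ := by
    rw [hO]; exact image_pCyl' n hρ
  have himgH : T '' heatBall n O (θ ^ n) = heatBall n O r := by
    rw [hO, image_heatBall' n hρ, hkey]
  have hseteq : pCyl n O ρ \ heatBall n O r = T '' (C₁ \ heatBall n O (θ ^ n)) := by
    rw [hC₁, Set.image_diff (injective_scale' n hρ), himgC, himgH]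
  have hsub : C₁ \ heatBall n O (θ ^ n) ⊆ A k := by
    apply Set.diff_subset_diff_right
    exact heatBall_mono' n hθn_le
  have hvol : volume (pCyl n O ρ \ heatBall n O r)
      = ENNReal.ofReal (ρ ^ (n + 2)) * volume (C₁ \ heatBall n O (θ ^ n)) := by
    rw [hseteq, hT]
    exact vol_image_scale' n hρ _ ((measurableSet_pCyl' n O 1).diff (measurableSet_heatBall' n _))
  have hcyl : cylVol n ρ = ENNReal.ofReal (ρ ^ (n + 2)) * cylVol n 1 := by
    have h2 := vol_image_scale' n hρ (pCyl n O 1) (measurableSet_pCyl' n O 1)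
    rw [himgC] at h2
    have e1 : cylVol n ρ = volume (pCyl n O ρ) := by rw [cylVol, hO]
    have e2 : cylVol n 1 = volume (pCyl n O 1) := by rw [cylVol, hO]
    rw [e1, e2, h2]
  rw [hvol, hcyl]
  calc ENNReal.ofReal (ρ ^ (n + 2)) * volume (C₁ \ heatBall n O (θ ^ n))
      ≤ ENNReal.ofReal (ρ ^ (n + 2)) * ε := by
        gcongr
        exact le_trans (measure_mono hsub) hk.le
    _ = ENNReal.ofReal (θ₀ / 4) * (ENNReal.ofReal (ρ ^ (n + 2)) * cylVol n 1) := by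
        rw [hε]; ring

end
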